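/- Let f_{m,r,s}(x) = Σ_{n≥1} c_{n,m,r,s} x^n as a formal power series over the rationals, where c_{n,m,r,s} is the number of 210-avoiding ascent sequences of length n with exactly m ascents, largest letter r, and last letter s (and f with any negative index is 0). Then for m ≥ 1 and 0 ≤ s < r ≤ m, (1−x)²·f_{m,r,s} = x(1−x)·Σ_{i=0}^{s−1} f_{m−1,r,i} + x(1−x)·Σ_{j=s+1}^{r−1} f_{m−1,j,s} + x²·Σ_{i=0}^{s} Σ_{j=i}^{r} f_{m−1,j,i} − x²·Σ_{j=s+1}^{r−1} Σ_{i=0}^{s−1} f_{m−2,j,i}. -/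

import Mathlib

/-- Number of ascents of a sequence of non-negative integers:
indices `j` with `x j < x (j+1)`. -/
def ascents (l : List ℕ) : ℕ :=
  ((l.zip l.tail).filter (fun p => p.1 < p.2)).length

/-- `x` is an ascent sequence: it starts with 0 and each subsequent letter is at most
one more than the number of ascents of the preceding prefix. -/
def IsAscentSeq (x : List ℕ) : Prop :=
  (∀ h : 0 < x.length, x.get ⟨0, h⟩ = 0) ∧
  ∀ i : Fin x.length, 0 < (i : ℕ) → x.get i ≤ ascents (x.take (i : ℕ)) + 1

/-- `p` contains the pattern `t`: `p` has a subsequence order-isomorphic to `t`. -/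
def Contains (p t : List ℕ) : Prop :=
  ∃ f : Fin t.length → Fin p.length, StrictMono f ∧
    ∀ i j : Fin t.length, t.get i < t.get j ↔ p.get (f i) < p.get (f j)

/-- `p` avoids the pattern `t`. -/
def Avoids (p t : List ℕ) : Prop := ¬ Contains p t

/-- `cA n m r s` is the number of 210-avoiding ascent sequences of length `n` with
exactly `m` ascents, largest letter `r`, and last letter `s`. -/
noncomputable def cA (n m r s : ℕ) : ℕ :=
  {x : List ℕ | x.length = n ∧ IsAscentSeq x ∧ Avoids x [2, 1, 0] ∧
    ascents x = m ∧ x.foldr max 0 = r ∧ x.getLast? = some s}.ncard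

/-- `fGF m r s = Σ_{n ≥ 1} cA n m r s * x^n`, the generating function of the numbers
`c_{n,m,r,s}` (note `cA 0 m r s = 0`, as the empty list has no last letter);
any negative index yields `0`. -/
noncomputable def fGF (m r s : ℤ) : PowerSeries ℚ :=
  if 0 ≤ m ∧ 0 ≤ r ∧ 0 ≤ s then
    PowerSeries.mk (fun n => (cA n m.toNat r.toNat s.toNat : ℚ))
  else 0

open PowerSeries

@[simp] lemma ascents_nil : ascents [] = 0 := rfl
@[simp] lemma ascents_single (a : ℕ) : ascents [a] = 0 := rfl

lemma ascents_cons_cons (a b : ℕ) (l : List ℕ) :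
    ascents (a :: b :: l) = (if a < b then 1 else 0) + ascents (b :: l) := by
  simp only [ascents, List.tail_cons, List.zip_cons_cons, List.filter_cons]
  by_cases h : a < b <;> simp [h, Nat.add_comm]

lemma ascents_append_singleton (y : List ℕ) (hy : y ≠ []) (t : ℕ) :
    ascents (y ++ [t]) = ascents y + (if y.getLast hy < t then 1 else 0) := by
  induction y with
  | nil => simp at hy
  | cons a l ih =>
    cases l with
    | nil =>
      simp only [List.cons_append, List.nil_append, ascents_cons_cons, ascents_single,
        ascents_nil, List.getLast_singleton]
      by_cases h : a < t <;> simp [h]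
    | cons b l' =>
      have h2 : (b :: l') ≠ [] := by simp
      rw [List.cons_append, List.cons_append, ascents_cons_cons, ← List.cons_append, ih h2,
        ascents_cons_cons, List.getLast_cons h2]
      omega




/-- nat-index version of ascent sequence -/
lemma isAscentSeq_iff (x : List ℕ) : IsAscentSeq x ↔
    (∀ h : 0 < x.length, x[0] = 0) ∧
    ∀ i (h : i < x.length), 0 < i → x[i] ≤ ascents (x.take i) + 1 := by
  constructor
  · rintro ⟨h1, h2⟩
    exact ⟨fun h => h1 h, fun i h hi => h2 ⟨i, h⟩ hi⟩
  · rintro ⟨h1, h2⟩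
    exact ⟨fun h => h1 h, fun i hi => h2 i i.isLt hi⟩

def Has210 (p : List ℕ) : Prop :=
  ∃ i j k, ∃ _ : i < j, ∃ _ : j < k, ∃ _ : k < p.length,
    p[k] < p[j] ∧ p[j] < p[i]

def HasInvGT (y : List ℕ) (t : ℕ) : Prop :=
  ∃ i j, ∃ _ : i < j, ∃ _ : j < y.length, t < y[j] ∧ y[j] < y[i]

lemma contains_210_iff (p : List ℕ) : Contains p [2, 1, 0] ↔ Has210 p := by
  constructor
  · rintro ⟨f, hf, hiff⟩
    set i0 : Fin ([2,1,0] : List ℕ).length := ⟨0, by simp⟩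
    set i1 : Fin ([2,1,0] : List ℕ).length := ⟨1, by simp⟩
    set i2 : Fin ([2,1,0] : List ℕ).length := ⟨2, by simp⟩
    refine ⟨f i0, f i1, f i2, hf (show i0 < i1 by simp [i0, i1, Fin.lt_def]),
      hf (show i1 < i2 by simp [i1, i2, Fin.lt_def]), (f i2).isLt, ?_, ?_⟩
    · have := (hiff i2 i1).mp (by simp [i1, i2, List.get_eq_getElem])
      simpa [List.get_eq_getElem] using this
    · have := (hiff i1 i0).mp (by simp [i0, i1, List.get_eq_getElem])
      simpa [List.get_eq_getElem] using this
  · rintro ⟨i, j, k, hij, hjk, hk, h1, h2⟩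
    refine ⟨![⟨i, by omega⟩, ⟨j, by omega⟩, ⟨k, by omega⟩], ?_, ?_⟩
    · intro a b hab
      fin_cases a <;> fin_cases b <;>
        simp_all [Fin.lt_def] <;> omega
    · intro a b
      fin_cases a <;> fin_cases b <;>
        simp_all [List.get_eq_getElem, Fin.lt_def] <;> omega

lemma has210_append (y : List ℕ) (t : ℕ) :
    Has210 (y ++ [t]) ↔ Has210 y ∨ HasInvGT y t := by
  constructor
  · rintro ⟨i, j, k, hij, hjk, hk, h1, h2⟩
    have hlen : (y ++ [t]).length = y.length + 1 := by simp
    have hjy : j < y.length := by omega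
    have hiy : i < y.length := by omega
    rw [List.getElem_append_left hjy, List.getElem_append_left hiy] at *
    by_cases hky : k < y.length
    · rw [List.getElem_append_left hky] at h1
      exact Or.inl ⟨i, j, k, hij, hjk, hky, h1, h2⟩
    · have hkk : k = y.length := by omega
      subst hkk
      rw [List.getElem_concat_length rfl] at h1
      exact Or.inr ⟨i, j, hij, hjy, h1, h2⟩
  · rintro (⟨i, j, k, hij, hjk, hk, h1, h2⟩ | ⟨i, j, hij, hj, h1, h2⟩)
    · refine ⟨i, j, k, hij, hjk, by simp; omega, ?_, ?_⟩ <;>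
        rw [List.getElem_append_left (by omega), List.getElem_append_left (by omega)] <;>
        assumption
    · refine ⟨i, j, y.length, hij, hj, by simp, ?_, ?_⟩
      · rw [List.getElem_concat_length rfl, List.getElem_append_left (by omega)]; exact h1
      · rw [List.getElem_append_left (by omega), List.getElem_append_left (by omega)]; exact h2

lemma hasInvGT_anti {y : List ℕ} {t t' : ℕ} (h : t ≤ t') (hy : HasInvGT y t') :
    HasInvGT y t := by
  obtain ⟨i, j, hij, hj, h1, h2⟩ := hy
  exact ⟨i, j, hij, hj, by omega, h2⟩

/-- if x avoids 210 and ends with letter s (at the last position), then x has no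
inversion with bottom > s -/
lemma not_hasInvGT_of_not_has210 {x : List ℕ} (hx : ¬ Has210 x)
    (hlast : x.getLast? = some s) : ¬ HasInvGT x s := by
  rintro ⟨i, j, hij, hj, h1, h2⟩
  have hne : x ≠ [] := by rintro rfl; simp at hlast
  have hlen : 0 < x.length := List.length_pos_iff.mpr hne
  have hlast' : x[x.length - 1] = s := by
    rw [← List.getLast_eq_getElem hne]
    rw [List.getLast?_eq_getLast hne] at hlast
    exact Option.some_injective _ hlast
  by_cases hjl : j = x.length - 1
  · subst hjl; omega
  · exact hx ⟨i, j, x.length - 1, hij, by omega, by omega, by rw [hlast']; omega, h2⟩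

def maxL (l : List ℕ) : ℕ := l.foldr max 0

lemma maxL_append_singleton (y : List ℕ) (t : ℕ) :
    maxL (y ++ [t]) = max (maxL y) t := by
  induction y with
  | nil => simp [maxL]
  | cons a l ih => simp only [maxL, List.cons_append, List.foldr_cons] at *; omega

lemma le_maxL_of_mem {l : List ℕ} {u : ℕ} (h : u ∈ l) : u ≤ maxL l := by
  induction l with
  | nil => simp at h
  | cons a l' ih =>
    rcases List.mem_cons.mp h with rfl | h'
    · simp only [maxL, List.foldr_cons]; omega
    · have := ih h'; simp only [maxL, List.foldr_cons] at *; omega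

lemma maxL_le {l : List ℕ} {a : ℕ} (h : ∀ u ∈ l, u ≤ a) : maxL l ≤ a := by
  induction l with
  | nil => simp [maxL]
  | cons b l' ih =>
    have := h b (by simp)
    have := ih (fun u hu => h u (by simp [hu]))
    simp only [maxL, List.foldr_cons] at *; omega

lemma maxL_eq_of {l : List ℕ} {a : ℕ} (hmem : a ∈ l) (hub : ∀ u ∈ l, u ≤ a) :
    maxL l = a :=
  le_antisymm (maxL_le hub) (le_maxL_of_mem hmem)

lemma take_append_sing {y : List ℕ} {t : ℕ} {i : ℕ} (h : i ≤ y.length) :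
    (y ++ [t]).take i = y.take i :=
  List.take_eq_left_iff.mpr (Or.inr h)

lemma isAscentSeq_append (y : List ℕ) (hy : y ≠ []) (t : ℕ) :
    IsAscentSeq (y ++ [t]) ↔ IsAscentSeq y ∧ t ≤ ascents y + 1 := by
  have hlen : 0 < y.length := List.length_pos_iff.mpr hy
  rw [isAscentSeq_iff, isAscentSeq_iff]
  constructor
  · rintro ⟨h1, h2⟩
    refine ⟨⟨fun h => ?_, fun i hi hpos => ?_⟩, ?_⟩
    · have := h1 (by simp)
      rwa [List.getElem_append_left h] at this
    · have := h2 i (by simp; omega) hpos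
      rwa [List.getElem_append_left hi, take_append_sing (by omega)] at this
    · have := h2 y.length (by simp) hlen
      rwa [List.getElem_concat_length rfl, take_append_sing le_rfl,
        List.take_length] at this
  · rintro ⟨⟨h1, h2⟩, h3⟩
    refine ⟨fun h => ?_, fun i hi hpos => ?_⟩
    · rw [List.getElem_append_left hlen]
      exact h1 hlen
    · by_cases hiy : i < y.length
      · rw [List.getElem_append_left hiy, take_append_sing (by omega)]
        exact h2 i hiy hpos
      · have hieq : i = y.length := by simp at hi; omega
        subst hieq
        rw [List.getElem_concat_length rfl, take_append_sing le_rfl, List.take_length]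
        exact h3

lemma getLast?_append_sing (y : List ℕ) (t : ℕ) : (y ++ [t]).getLast? = some t := by
  simp

lemma getLast_eq_of_getLast? {y : List ℕ} {s : ℕ} (h : y.getLast? = some s)
    (hy : y ≠ []) : y.getLast hy = s := by
  rw [List.getLast?_eq_getLast hy] at h
  exact Option.some_injective _ h

lemma hasInvGT_of_append {y : List ℕ} {a t : ℕ} (h : HasInvGT y t) :
    HasInvGT (y ++ [a]) t := by
  obtain ⟨i, j, hij, hj, h1, h2⟩ := h
  refine ⟨i, j, hij, by simp; omega, ?_, ?_⟩ <;>
    rw [List.getElem_append_left (by omega)] <;>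
    first
      | exact h1
      | rw [List.getElem_append_left (by omega)]; exact h2

lemma hasInvGT_append_elim {y : List ℕ} {a t : ℕ} (h : HasInvGT (y ++ [a]) t) :
    HasInvGT y t ∨ ∃ i, ∃ _ : i < y.length, a < y[i] := by
  obtain ⟨i, j, hij, hj, h1, h2⟩ := h
  have hiy : i < y.length := by simp at hj; omega
  rw [List.getElem_append_left hiy] at h2
  by_cases hjy : j < y.length
  · rw [List.getElem_append_left hjy] at h1 h2
    exact Or.inl ⟨i, j, hij, hjy, h1, h2⟩
  · have : j = y.length := by simp at hj; omega
    subst this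
    rw [List.getElem_concat_length rfl] at h2
    exact Or.inr ⟨i, hiy, h2⟩

lemma maxL_eq_last_of_not_invGT {y : List ℕ} {t : ℕ} (hy : y ≠ [])
    (ht : ¬ HasInvGT y t) (hgt : t < y.getLast hy) : maxL y = y.getLast hy := by
  refine maxL_eq_of (List.getLast_mem hy) ?_
  intro u hu
  by_contra hlt
  push_neg at hlt
  obtain ⟨i, hi, rfl⟩ := List.getElem_of_mem hu
  have hlen : 0 < y.length := List.length_pos_iff.mpr hy
  have hlast : y.getLast hy = y[y.length - 1] := List.getLast_eq_getElem hy
  have hine : i ≠ y.length - 1 := by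
    intro h
    have heq : y[i] = y[y.length - 1] := by congr 1
    omega
  exact ht ⟨i, y.length - 1, by omega, by omega, by rw [← hlast]; omega, by rw [← hlast]; omega⟩

def CSet (n m r s : ℕ) : Set (List ℕ) :=
  {x : List ℕ | x.length = n ∧ IsAscentSeq x ∧ Avoids x [2, 1, 0] ∧
    ascents x = m ∧ x.foldr max 0 = r ∧ x.getLast? = some s}

def ESet (n m r s : ℕ) : Set (List ℕ) :=
  {x | x ∈ CSet n m r r ∧ ¬ HasInvGT x s}

lemma mem_CSet_iff {x : List ℕ} {n m r s : ℕ} : x ∈ CSet n m r s ↔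
    x.length = n ∧ IsAscentSeq x ∧ ¬ Has210 x ∧
    ascents x = m ∧ maxL x = r ∧ x.getLast? = some s := by
  unfold CSet Avoids maxL
  simp only [Set.mem_setOf_eq, contains_210_iff]

lemma ne_nil_of_mem_CSet {x : List ℕ} {n m r s : ℕ} (h : x ∈ CSet n m r s) : x ≠ [] := by
  rintro rfl
  simp [mem_CSet_iff] at h

lemma getLast_of_mem_CSet {x : List ℕ} {n m r s : ℕ} (h : x ∈ CSet n m r s)
    (hx : x ≠ []) : x.getLast hx = s :=
  getLast_eq_of_getLast? (mem_CSet_iff.mp h).2.2.2.2.2 hx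

lemma append_mem_CSet_iff {y : List ℕ} (hy : y ≠ []) {t n' m r s : ℕ} :
    (y ++ [t]) ∈ CSet n' m r s ↔
      y.length + 1 = n' ∧ IsAscentSeq y ∧ t ≤ ascents y + 1 ∧ ¬ Has210 y ∧
      ¬ HasInvGT y t ∧ ascents y + (if y.getLast hy < t then 1 else 0) = m ∧
      max (maxL y) t = r ∧ t = s := by
  rw [mem_CSet_iff]
  rw [isAscentSeq_append y hy t, has210_append, ascents_append_singleton y hy t,
    maxL_append_singleton, getLast?_append_sing]
  simp only [List.length_append, List.length_singleton, not_or, Option.some_inj]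
  tauto

lemma CSet_succ_eq (n m r s : ℕ) (hm : 1 ≤ m) (hsr : s < r) (hrm : r ≤ m) :
    CSet (n + 1) m r s =
      (fun y => y ++ [s]) ''
        (CSet n m r s ∪ (⋃ i ∈ Finset.range s, CSet n (m - 1) r i) ∪ ESet n m r s) := by
  ext x
  constructor
  · intro hx
    have hne : x ≠ [] := ne_nil_of_mem_CSet hx
    have hxeq : x.dropLast ++ [x.getLast hne] = x := List.dropLast_append_getLast hne
    have hlast : x.getLast hne = s := getLast_of_mem_CSet hx hne
    set y := x.dropLast with hydef
    rw [hlast] at hxeq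
    by_cases hyne : y = []
    · exfalso
      rw [hyne, List.nil_append] at hxeq
      rw [← hxeq, mem_CSet_iff] at hx
      obtain ⟨_, hasc, _, hm', _⟩ := hx
      rw [isAscentSeq_iff] at hasc
      simp at hm'
      omega
    · rw [← hxeq, append_mem_CSet_iff hyne] at hx
      obtain ⟨hlen, hasc, hle, h210, hinv, hascents, hmax, _⟩ := hx
      refine ⟨y, ?_, hxeq⟩
      set s' := y.getLast hyne with hs'
      have hylast : y.getLast? = some s' := List.getLast?_eq_getLast hyne
      rcases lt_trichotomy s' s with hc | hc | hc
      · -- s' < s : ascent, y ∈ CSet n (m-1) r s'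
        left; right
        rw [if_pos hc] at hascents
        have hmaxy : maxL y = r := by
          have : maxL y ≤ r := by omega
          omega
        refine Set.mem_biUnion (Finset.mem_range.mpr hc) ?_
        exact mem_CSet_iff.mpr ⟨by omega, hasc, h210, by omega, hmaxy, hylast⟩
      · -- s' = s : no ascent, y ∈ CSet n m r s
        left; left
        rw [if_neg (by omega)] at hascents
        have hmaxy : maxL y = r := by omega
        rw [hc] at hylast
        exact mem_CSet_iff.mpr ⟨by omega, hasc, h210, by omega, hmaxy, hylast⟩
      · -- s' > s : y ends with its max, y ∈ ESet n m r s
        right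
        rw [if_neg (by omega)] at hascents
        have hmaxy : maxL y = s' := maxL_eq_last_of_not_invGT hyne hinv hc
        have hsr' : s' = r := by omega
        rw [hsr'] at hylast
        exact ⟨mem_CSet_iff.mpr ⟨by omega, hasc, h210, by omega, by omega, hylast⟩, hinv⟩
  · rintro ⟨y, hy, rfl⟩
    rcases hy with (hy | hy) | hy
    · have hyne := ne_nil_of_mem_CSet hy
      rw [mem_CSet_iff] at hy
      obtain ⟨hlen, hasc, h210, hascents, hmax, hlast⟩ := hy
      have hlast' : y.getLast hyne = s := getLast_eq_of_getLast? hlast hyne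
      refine (append_mem_CSet_iff hyne).mpr ⟨by omega, hasc, by omega, h210, ?_, ?_, ?_, rfl⟩
      · rw [← hlast'] at hlast ⊢
        exact not_hasInvGT_of_not_has210 h210 hlast
      · rw [hlast', if_neg (by omega)]; omega
      · have : s ≤ maxL y := by rw [← hlast']; exact le_maxL_of_mem (List.getLast_mem hyne)
        omega
    · obtain ⟨i, hi, hy⟩ := Set.mem_iUnion₂.mp hy
      have hii : i < s := Finset.mem_range.mp hi
      have hyne := ne_nil_of_mem_CSet hy
      rw [mem_CSet_iff] at hy
      obtain ⟨hlen, hasc, h210, hascents, hmax, hlast⟩ := hy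
      have hlast' : y.getLast hyne = i := getLast_eq_of_getLast? hlast hyne
      refine (append_mem_CSet_iff hyne).mpr ⟨by omega, hasc, by omega, h210, ?_, ?_, ?_, rfl⟩
      · intro h
        refine not_hasInvGT_of_not_has210 h210 (hlast' ▸ List.getLast?_eq_getLast hyne)
          (hasInvGT_anti (by omega) h)
      · rw [hlast', if_pos (by omega)]; omega
      · omega
    · obtain ⟨hy, hinv⟩ := hy
      have hyne := ne_nil_of_mem_CSet hy
      rw [mem_CSet_iff] at hy
      obtain ⟨hlen, hasc, h210, hascents, hmax, hlast⟩ := hy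
      have hlast' : y.getLast hyne = r := getLast_eq_of_getLast? hlast hyne
      refine (append_mem_CSet_iff hyne).mpr ⟨by omega, hasc, by omega, h210, hinv, ?_, ?_, rfl⟩
      · rw [hlast', if_neg (by omega)]; omega
      · omega

lemma hasInvGT_append_iff_of_le {y : List ℕ} {a t : ℕ} (hmax : maxL y ≤ a) :
    HasInvGT (y ++ [a]) t ↔ HasInvGT y t := by
  constructor
  · intro h
    rcases hasInvGT_append_elim h with h | ⟨i, hi, h⟩
    · exact h
    · exact absurd (le_trans (le_maxL_of_mem (List.getElem_mem hi)) hmax) (by omega)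
  · exact hasInvGT_of_append

lemma ESet_succ_eq (n m r s : ℕ) (hm : 1 ≤ m) (hsr : s < r) (hrm : r ≤ m) :
    ESet (n + 1) m r s =
      (fun y => y ++ [r]) ''
        (ESet n m r s ∪
          (⋃ i ∈ Finset.range (s + 1), ⋃ j ∈ Finset.Icc i r, CSet n (m - 1) j i) ∪
          ⋃ j ∈ Finset.Icc (s + 1) (r - 1), ESet n (m - 1) j s) := by
  ext x
  constructor
  · rintro ⟨hx, hxinv⟩
    have hne : x ≠ [] := ne_nil_of_mem_CSet hx
    have hxeq : x.dropLast ++ [x.getLast hne] = x := List.dropLast_append_getLast hne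
    have hlast : x.getLast hne = r := getLast_of_mem_CSet hx hne
    set y := x.dropLast with hydef
    rw [hlast] at hxeq
    by_cases hyne : y = []
    · exfalso
      rw [hyne, List.nil_append] at hxeq
      rw [← hxeq, mem_CSet_iff] at hx
      obtain ⟨_, hasc, _⟩ := hx
      rw [isAscentSeq_iff] at hasc
      have := hasc.1 (by simp)
      simp at this
      omega
    · rw [← hxeq] at hx hxinv
      rw [append_mem_CSet_iff hyne] at hx
      obtain ⟨hlen, hasc, hle, h210, hinv, hascents, hmax, _⟩ := hx
      have hyinv : ¬ HasInvGT y s := fun h => hxinv (hasInvGT_of_append h)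
      refine ⟨y, ?_, hxeq⟩
      set s' := y.getLast hyne with hs'
      have hylast : y.getLast? = some s' := List.getLast?_eq_getLast hyne
      have hsmax : s' ≤ maxL y := le_maxL_of_mem (List.getLast_mem hyne)
      by_cases hc : s' = r
      · -- no ascent; y ∈ ESet n m r s
        left; left
        rw [if_neg (by omega)] at hascents
        have hmaxy : maxL y = r := by omega
        rw [hc] at hylast
        exact ⟨mem_CSet_iff.mpr ⟨by omega, hasc, h210, by omega, hmaxy, hylast⟩, hyinv⟩
      · have hc' : s' < r := by
          have : s' ≤ max (maxL y) r := le_trans hsmax (by omega)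
          omega
        rw [if_pos hc'] at hascents
        by_cases hcs : s' ≤ s
        · -- y ∈ CSet n (m-1) (maxL y) s'
          left; right
          refine Set.mem_iUnion₂.mpr ⟨s', Finset.mem_range.mpr (by omega), ?_⟩
          refine Set.mem_iUnion₂.mpr ⟨maxL y, Finset.mem_Icc.mpr ⟨hsmax, by omega⟩, ?_⟩
          exact mem_CSet_iff.mpr ⟨by omega, hasc, h210, by omega, rfl, hylast⟩
        · -- s < s' < r : y ∈ ESet n (m-1) s' s
          right
          have hmaxy : maxL y = s' := maxL_eq_last_of_not_invGT hyne hyinv (by omega)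
          refine Set.mem_iUnion₂.mpr ⟨s', Finset.mem_Icc.mpr ⟨by omega, by omega⟩, ?_⟩
          exact ⟨mem_CSet_iff.mpr ⟨by omega, hasc, h210, by omega, hmaxy, hylast⟩, hyinv⟩
  · rintro ⟨y, hy, rfl⟩
    rcases hy with (hy | hy) | hy
    · obtain ⟨hy, hinv⟩ := hy
      have hyne := ne_nil_of_mem_CSet hy
      rw [mem_CSet_iff] at hy
      obtain ⟨hlen, hasc, h210, hascents, hmax, hlast⟩ := hy
      have hlast' : y.getLast hyne = r := getLast_eq_of_getLast? hlast hyne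
      constructor
      · refine (append_mem_CSet_iff hyne).mpr ⟨by omega, hasc, by omega, h210, ?_, ?_, ?_, rfl⟩
        · exact fun h => hinv (hasInvGT_anti (by omega) h)
        · rw [hlast', if_neg (by omega)]; omega
        · omega
      · rw [hasInvGT_append_iff_of_le (by omega)]
        exact hinv
    · obtain ⟨i, hi, hy⟩ := Set.mem_iUnion₂.mp hy
      obtain ⟨j, hj, hy⟩ := Set.mem_iUnion₂.mp hy
      have his : i < s + 1 := Finset.mem_range.mp hi
      obtain ⟨hij, hjr⟩ := Finset.mem_Icc.mp hj
      have hyne := ne_nil_of_mem_CSet hy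
      rw [mem_CSet_iff] at hy
      obtain ⟨hlen, hasc, h210, hascents, hmax, hlast⟩ := hy
      have hlast' : y.getLast hyne = i := getLast_eq_of_getLast? hlast hyne
      have hyinv : ¬ HasInvGT y i :=
        not_hasInvGT_of_not_has210 h210 (hlast' ▸ List.getLast?_eq_getLast hyne)
      constructor
      · refine (append_mem_CSet_iff hyne).mpr ⟨by omega, hasc, by omega, h210, ?_, ?_, ?_, rfl⟩
        · exact fun h => hyinv (hasInvGT_anti (by omega) h)
        · rw [hlast', if_pos (by omega)]; omega
        · omega
      · rw [hasInvGT_append_iff_of_le (by omega)]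
        exact fun h => hyinv (hasInvGT_anti (by omega) h)
    · obtain ⟨j, hj, hy⟩ := Set.mem_iUnion₂.mp hy
      obtain ⟨hsj, hjr⟩ := Finset.mem_Icc.mp hj
      obtain ⟨hy, hinv⟩ := hy
      have hyne := ne_nil_of_mem_CSet hy
      rw [mem_CSet_iff] at hy
      obtain ⟨hlen, hasc, h210, hascents, hmax, hlast⟩ := hy
      have hlast' : y.getLast hyne = j := getLast_eq_of_getLast? hlast hyne
      constructor
      · refine (append_mem_CSet_iff hyne).mpr ⟨by omega, hasc, by omega, h210, ?_, ?_, ?_, rfl⟩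
        · exact fun h => hinv (hasInvGT_anti (by omega) h)
        · rw [hlast', if_pos (by omega)]; omega
        · omega
      · rw [hasInvGT_append_iff_of_le (by omega)]
        exact hinv

lemma CSet_finite (n m r s : ℕ) : (CSet n m r s).Finite := by
  have hsub : CSet n m r s ⊆
      (fun l : List (Fin (r + 1)) => l.map Fin.val) '' {l | l.length = n} := by
    intro x hx
    rw [mem_CSet_iff] at hx
    have hbound : ∀ u ∈ x, u < r + 1 := by
      intro u hu
      have := le_maxL_of_mem hu
      omega
    refine ⟨x.pmap (fun u hu => (⟨u, hu⟩ : Fin (r + 1))) hbound, by simp [hx.1], ?_⟩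
    simp [List.map_pmap]
  exact Set.Finite.subset (Set.Finite.image _ (List.finite_length_eq (Fin (r + 1)) n)) hsub

lemma ESet_finite (n m r s : ℕ) : (ESet n m r s).Finite :=
  (CSet_finite n m r r).subset (fun _ h => h.1)

lemma ncard_biUnion {ι α : Type*} (t : Finset ι) (f : ι → Set α)
    (hfin : ∀ i ∈ t, (f i).Finite)
    (hdisj : ∀ i ∈ t, ∀ j ∈ t, i ≠ j → Disjoint (f i) (f j)) :
    (⋃ i ∈ t, f i).ncard = ∑ i ∈ t, (f i).ncard := by
  classical
  induction t using Finset.induction_on with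
  | empty => simp
  | @insert a t' ha ih =>
    rw [Finset.sum_insert ha, Finset.set_biUnion_insert]
    rw [Set.ncard_union_eq ?_ (hfin a (by simp)) ?_, ih]
    · exact fun i hi => hfin i (by simp [hi])
    · exact fun i hi j hj hij => hdisj i (by simp [hi]) j (by simp [hj]) hij
    · rw [Set.disjoint_iUnion_right]
      intro i
      rw [Set.disjoint_iUnion_right]
      intro hi
      replace hi : i ∈ t' := hi
      exact hdisj a (by simp) i (by simp [hi]) (by rintro rfl; exact ha hi)
    · exact Set.Finite.biUnion (Finset.finite_toSet t')
        (fun i hi => hfin i (Finset.mem_insert_of_mem (by simpa using hi)))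

lemma disjoint_CSet_last {n m r s n' m' r' s' : ℕ} (h : s ≠ s') :
    Disjoint (CSet n m r s) (CSet n' m' r' s') := by
  rw [Set.disjoint_left]
  intro x hx hx'
  rw [mem_CSet_iff] at hx hx'
  exact h (Option.some_injective _ ((hx.2.2.2.2.2).symm.trans hx'.2.2.2.2.2))

lemma disjoint_CSet_max {n m r s n' m' r' s' : ℕ} (h : r ≠ r') :
    Disjoint (CSet n m r s) (CSet n' m' r' s') := by
  rw [Set.disjoint_left]
  intro x hx hx'
  rw [mem_CSet_iff] at hx hx'
  exact h (hx.2.2.2.2.1 ▸ hx'.2.2.2.2.1 ▸ rfl)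

lemma disjoint_ESet_CSet {n m r s n' m' r' s' : ℕ} (h : r ≠ s') :
    Disjoint (ESet n m r s) (CSet n' m' r' s') :=
  Disjoint.mono_left (fun _ hx => hx.1) (disjoint_CSet_last h)

lemma disjoint_ESet_ESet {n m r s n' m' r' s' : ℕ} (h : r ≠ r') :
    Disjoint (ESet n m r s) (ESet n' m' r' s') :=
  Disjoint.mono (fun _ hx => hx.1) (fun _ hx => hx.1) (disjoint_CSet_last h)

lemma count_C (n m r s : ℕ) (hm : 1 ≤ m) (hsr : s < r) (hrm : r ≤ m) :
    (CSet (n + 1) m r s).ncard =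
      (CSet n m r s).ncard + (∑ i ∈ Finset.range s, (CSet n (m - 1) r i).ncard)
        + (ESet n m r s).ncard := by
  rw [CSet_succ_eq n m r s hm hsr hrm,
    Set.ncard_image_of_injOn ((List.append_left_injective [s]).injOn)]
  have hBfin : (⋃ i ∈ Finset.range s, CSet n (m - 1) r i).Finite :=
    Set.Finite.biUnion (Finset.finite_toSet _) (fun i _ => CSet_finite n (m - 1) r i)
  have hABfin : (CSet n m r s ∪ ⋃ i ∈ Finset.range s, CSet n (m - 1) r i).Finite :=
    (CSet_finite n m r s).union hBfin
  rw [Set.ncard_union_eq ?_ hABfin (ESet_finite n m r s),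
    Set.ncard_union_eq ?_ (CSet_finite n m r s) hBfin,
    ncard_biUnion _ _ (fun i _ => CSet_finite n (m - 1) r i)
      (fun i _ j _ hij => disjoint_CSet_last hij)]
  · rw [Set.disjoint_iUnion_right]
    intro i
    rw [Set.disjoint_iUnion_right]
    intro hi
    have : i < s := Finset.mem_range.mp (by simpa using hi)
    exact disjoint_CSet_last (by omega)
  · rw [Set.disjoint_union_left]
    constructor
    · exact (disjoint_ESet_CSet (by omega)).symm
    · rw [Set.disjoint_iUnion_left]
      intro i
      rw [Set.disjoint_iUnion_left]
      intro hi
      have : i < s := Finset.mem_range.mp (by simpa using hi)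
      exact (disjoint_ESet_CSet (by omega)).symm

lemma count_E (n m r s : ℕ) (hm : 1 ≤ m) (hsr : s < r) (hrm : r ≤ m) :
    (ESet (n + 1) m r s).ncard =
      (ESet n m r s).ncard
        + (∑ i ∈ Finset.range (s + 1), ∑ j ∈ Finset.Icc i r, (CSet n (m - 1) j i).ncard)
        + ∑ j ∈ Finset.Icc (s + 1) (r - 1), (ESet n (m - 1) j s).ncard := by
  rw [ESet_succ_eq n m r s hm hsr hrm,
    Set.ncard_image_of_injOn ((List.append_left_injective [r]).injOn)]
  have hBfin : (⋃ i ∈ Finset.range (s + 1), ⋃ j ∈ Finset.Icc i r, CSet n (m - 1) j i).Finite :=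
    Set.Finite.biUnion (Finset.finite_toSet _) (fun i _ =>
      Set.Finite.biUnion (Finset.finite_toSet _) (fun j _ => CSet_finite n (m - 1) j i))
  have hABfin := (ESet_finite n m r s).union hBfin
  have hEfin : (⋃ j ∈ Finset.Icc (s + 1) (r - 1), ESet n (m - 1) j s).Finite :=
    Set.Finite.biUnion (Finset.finite_toSet _) (fun j _ => ESet_finite n (m - 1) j s)
  have hBcount : (⋃ i ∈ Finset.range (s + 1), ⋃ j ∈ Finset.Icc i r, CSet n (m - 1) j i).ncard
      = ∑ i ∈ Finset.range (s + 1), ∑ j ∈ Finset.Icc i r, (CSet n (m - 1) j i).ncard := by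
    rw [ncard_biUnion (Finset.range (s + 1))
      (fun i => ⋃ j ∈ Finset.Icc i r, CSet n (m - 1) j i)
      (fun i _ => Set.Finite.biUnion (Finset.finite_toSet _)
        (fun j _ => CSet_finite n (m - 1) j i)) ?_]
    · refine Finset.sum_congr rfl (fun i _ => ?_)
      exact ncard_biUnion _ _ (fun j _ => CSet_finite n (m - 1) j i)
        (fun j _ j' _ hjj => disjoint_CSet_max hjj)
    · intro i _ i' _ hii
      rw [Set.disjoint_iUnion_left]; intro j
      rw [Set.disjoint_iUnion_left]; intro _
      rw [Set.disjoint_iUnion_right]; intro j'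
      rw [Set.disjoint_iUnion_right]; intro _
      exact disjoint_CSet_last hii
  rw [Set.ncard_union_eq ?_ hABfin hEfin,
    Set.ncard_union_eq ?_ (ESet_finite n m r s) hBfin, hBcount,
    ncard_biUnion _ _ (fun j _ => ESet_finite n (m - 1) j s) ?_]
  · exact fun j hj j' hj' hjj => disjoint_ESet_ESet hjj
  · rw [Set.disjoint_iUnion_right]; intro i
    rw [Set.disjoint_iUnion_right]; intro hi
    rw [Set.disjoint_iUnion_right]; intro j
    rw [Set.disjoint_iUnion_right]; intro _
    have : i < s + 1 := Finset.mem_range.mp (by simpa using hi)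
    exact disjoint_ESet_CSet (by omega)
  · rw [Set.disjoint_union_left]
    constructor
    · rw [Set.disjoint_iUnion_right]; intro j
      rw [Set.disjoint_iUnion_right]; intro hj
      have : s + 1 ≤ j ∧ j ≤ r - 1 := by simpa using hj
      exact disjoint_ESet_ESet (by omega)
    · rw [Set.disjoint_iUnion_left]; intro i
      rw [Set.disjoint_iUnion_left]; intro hi
      rw [Set.disjoint_iUnion_left]; intro j
      rw [Set.disjoint_iUnion_left]; intro hj
      rw [Set.disjoint_iUnion_right]; intro j'
      rw [Set.disjoint_iUnion_right]; intro hj'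
      have h1 : i < s + 1 := Finset.mem_range.mp (by simpa using hi)
      have h2 : s + 1 ≤ j' ∧ j' ≤ r - 1 := by simpa using hj'
      exact (disjoint_ESet_CSet (by omega)).symm

lemma CSet_zero (m r s : ℕ) : (CSet 0 m r s).ncard = 0 := by
  have : CSet 0 m r s = ∅ := by
    ext x
    simp only [mem_CSet_iff, Set.mem_empty_iff_false, iff_false]
    rintro ⟨h1, -, -, -, -, h6⟩
    rw [List.length_eq_zero_iff.mp h1] at h6
    simp at h6
  simp [this]

lemma ESet_zero (m r s : ℕ) : (ESet 0 m r s).ncard = 0 := by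
  have h := CSet_zero m r r
  rw [Set.ncard_eq_zero (CSet_finite 0 m r r)] at h
  have : ESet 0 m r s = ∅ := Set.subset_eq_empty (fun x hx => h ▸ hx.1) rfl
  simp [this]


noncomputable def FF (m r s : ℕ) : PowerSeries ℚ :=
  PowerSeries.mk (fun n => ((CSet n m r s).ncard : ℚ))

noncomputable def EE (m r s : ℕ) : PowerSeries ℚ :=
  PowerSeries.mk (fun n => ((ESet n m r s).ncard : ℚ))

lemma gf1 (m r s : ℕ) (hm : 1 ≤ m) (hsr : s < r) (hrm : r ≤ m) :
    (1 - X) * FF m r s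
      = X * (∑ i ∈ Finset.range s, FF (m - 1) r i) + X * EE m r s := by
  ext n
  rw [sub_mul, one_mul, map_sub, map_add]
  cases n with
  | zero =>
    simp [FF, EE, coeff_zero_X_mul, CSet_zero]
  | succ k =>
    rw [coeff_succ_X_mul, coeff_succ_X_mul, coeff_succ_X_mul]
    simp only [FF, EE, coeff_mk, map_sum]
    have h := count_C k m r s hm hsr hrm
    have hc : ((CSet (k + 1) m r s).ncard : ℚ)
        = (CSet k m r s).ncard + (∑ i ∈ Finset.range s, ((CSet k (m - 1) r i).ncard : ℚ))
          + (ESet k m r s).ncard := by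
      rw [h]; push_cast; ring
    rw [hc]; ring

lemma gf2 (m r s : ℕ) (hm : 1 ≤ m) (hsr : s < r) (hrm : r ≤ m) :
    (1 - X) * EE m r s
      = X * (∑ i ∈ Finset.range (s + 1), ∑ j ∈ Finset.Icc i r, FF (m - 1) j i)
        + X * ∑ j ∈ Finset.Icc (s + 1) (r - 1), EE (m - 1) j s := by
  ext n
  rw [sub_mul, one_mul, map_sub, map_add]
  cases n with
  | zero =>
    simp [FF, EE, coeff_zero_X_mul, ESet_zero]
  | succ k =>
    rw [coeff_succ_X_mul, coeff_succ_X_mul, coeff_succ_X_mul]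
    simp only [FF, EE, coeff_mk, map_sum]
    have h := count_E k m r s hm hsr hrm
    have hc : ((ESet (k + 1) m r s).ncard : ℚ)
        = (ESet k m r s).ncard
          + (∑ i ∈ Finset.range (s + 1), ∑ j ∈ Finset.Icc i r, ((CSet k (m - 1) j i).ncard : ℚ))
          + ∑ j ∈ Finset.Icc (s + 1) (r - 1), ((ESet k (m - 1) j s).ncard : ℚ) := by
      rw [h]; push_cast; ring
    rw [hc]; ring

/-- main ℕ-level identity -/
lemma main_nat (m r s : ℕ) (hm : 1 ≤ m) (hsr : s < r) (hrm : r ≤ m) :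
    (1 - X) ^ 2 * FF m r s
      = X * (1 - X) * (∑ i ∈ Finset.range s, FF (m - 1) r i)
        + X * (1 - X) * (∑ j ∈ Finset.Icc (s + 1) (r - 1), FF (m - 1) j s)
        + X ^ 2 * (∑ i ∈ Finset.range (s + 1), ∑ j ∈ Finset.Icc i r, FF (m - 1) j i)
        - X ^ 2 * (∑ j ∈ Finset.Icc (s + 1) (r - 1), ∑ i ∈ Finset.range s, FF (m - 2) j i) := by
  have e1 := gf1 m r s hm hsr hrm
  have e2 := gf2 m r s hm hsr hrm
  have e3 : ∀ j ∈ Finset.Icc (s + 1) (r - 1),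
      X * EE (m - 1) j s = (1 - X) * FF (m - 1) j s
        - X * (∑ i ∈ Finset.range s, FF (m - 2) j i) := by
    intro j hj
    obtain ⟨hj1, hj2⟩ := Finset.mem_Icc.mp hj
    have hm1 : 1 ≤ m - 1 := by omega
    have h := gf1 (m - 1) j s hm1 (by omega) (by omega)
    have hmm : m - 1 - 1 = m - 2 := by omega
    rw [hmm] at h
    rw [h]; ring
  have e3' : X * (∑ j ∈ Finset.Icc (s + 1) (r - 1), EE (m - 1) j s)
      = (1 - X) * (∑ j ∈ Finset.Icc (s + 1) (r - 1), FF (m - 1) j s)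
        - X * (∑ j ∈ Finset.Icc (s + 1) (r - 1), ∑ i ∈ Finset.range s, FF (m - 2) j i) := by
    rw [Finset.mul_sum, Finset.sum_congr rfl e3, Finset.sum_sub_distrib,
      ← Finset.mul_sum, ← Finset.mul_sum]
  set A := FF m r s
  set B := EE m r s
  set S1 := ∑ i ∈ Finset.range s, FF (m - 1) r i
  set S2 := ∑ i ∈ Finset.range (s + 1), ∑ j ∈ Finset.Icc i r, FF (m - 1) j i
  set S3 := ∑ j ∈ Finset.Icc (s + 1) (r - 1), FF (m - 1) j s
  set S4 := ∑ j ∈ Finset.Icc (s + 1) (r - 1), ∑ i ∈ Finset.range s, FF (m - 2) j i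
  set T := ∑ j ∈ Finset.Icc (s + 1) (r - 1), EE (m - 1) j s
  linear_combination (1 - X) * e1 + X * e2 + X * e3'



lemma cA_eq (n m r s : ℕ) : cA n m r s = (CSet n m r s).ncard := rfl

lemma fGF_natCast (a b c : ℕ) : fGF (a : ℤ) (b : ℤ) (c : ℤ) = FF a b c := by
  simp only [fGF, Int.toNat_natCast]
  rw [if_pos ⟨Int.natCast_nonneg a, Int.natCast_nonneg b, Int.natCast_nonneg c⟩]
  unfold FF
  congr 1

lemma sum_Icc_zero {M : Type*} [AddCommMonoid M] (g : ℤ → M) (k : ℕ) :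
    ∑ i ∈ Finset.Icc (0 : ℤ) ((k : ℤ) - 1), g i = ∑ i ∈ Finset.range k, g (i : ℤ) := by
  refine Finset.sum_nbij' (fun i => i.toNat) (fun i => (i : ℤ)) ?_ ?_ ?_ ?_ ?_ <;>
    intro a ha <;>
    simp only [Finset.mem_Icc, Finset.mem_range] at * <;>
    first
      | omega
      | (congr 1; omega)
  
lemma sum_Icc_cast {M : Type*} [AddCommMonoid M] (g : ℤ → M) (a b : ℕ) :
    ∑ j ∈ Finset.Icc (a : ℤ) (b : ℤ), g j = ∑ j ∈ Finset.Icc a b, g (j : ℤ) := by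
  refine Finset.sum_nbij' (fun i => i.toNat) (fun i => (i : ℤ)) ?_ ?_ ?_ ?_ ?_ <;>
    intro x hx <;>
    simp only [Finset.mem_Icc] at * <;>
    first
      | omega
      | (congr 1; omega)


/-- The recurrence of Proposition 1 for `f_{m,r,s}` with `m ≥ 1` and
`0 ≤ s < r ≤ m`, multiplied through by `(1-x)²`. -/
theorem fGF_recurrence (m r s : ℤ) (hm : 1 ≤ m) (hs : 0 ≤ s) (hsr : s < r)
    (hrm : r ≤ m) :
    (1 - X) ^ 2 * fGF m r s
      = X * (1 - X) * (∑ i ∈ Finset.Icc 0 (s - 1), fGF (m - 1) r i)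
        + X * (1 - X) * (∑ j ∈ Finset.Icc (s + 1) (r - 1), fGF (m - 1) j s)
        + X ^ 2 * (∑ i ∈ Finset.Icc 0 s, ∑ j ∈ Finset.Icc i r, fGF (m - 1) j i)
        - X ^ 2 * (∑ j ∈ Finset.Icc (s + 1) (r - 1), ∑ i ∈ Finset.Icc 0 (s - 1),
            fGF (m - 2) j i) := by
  lift s to ℕ using hs with s' hs'
  lift r to ℕ using (by omega) with r' hr'
  lift m to ℕ using (by omega) with m' hm'
  have hm1 : 1 ≤ m' := by exact_mod_cast hm
  have hsr1 : s' < r' := by exact_mod_cast hsr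
  have hrm1 : r' ≤ m' := by exact_mod_cast hrm
  have hcast1 : (m' : ℤ) - 1 = ((m' - 1 : ℕ) : ℤ) := by omega
  have h1 : ∑ i ∈ Finset.Icc (0 : ℤ) ((s' : ℤ) - 1), fGF ((m' : ℤ) - 1) (r' : ℤ) i
      = ∑ i ∈ Finset.range s', FF (m' - 1) r' i := by
    rw [sum_Icc_zero (fun i => fGF ((m' : ℤ) - 1) (r' : ℤ) i) s']
    exact Finset.sum_congr rfl fun i _ => by rw [hcast1, fGF_natCast]
  have h2 : ∑ j ∈ Finset.Icc ((s' : ℤ) + 1) ((r' : ℤ) - 1), fGF ((m' : ℤ) - 1) j (s' : ℤ)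
      = ∑ j ∈ Finset.Icc (s' + 1) (r' - 1), FF (m' - 1) j s' := by
    rw [show ((s' : ℤ) + 1) = ((s' + 1 : ℕ) : ℤ) by omega,
      show ((r' : ℤ) - 1) = ((r' - 1 : ℕ) : ℤ) by omega,
      sum_Icc_cast (fun j => fGF ((m' : ℤ) - 1) j (s' : ℤ)) (s' + 1) (r' - 1)]
    exact Finset.sum_congr rfl fun j _ => by rw [hcast1, fGF_natCast]
  have h3 : ∑ i ∈ Finset.Icc (0 : ℤ) (s' : ℤ), ∑ j ∈ Finset.Icc i (r' : ℤ),
        fGF ((m' : ℤ) - 1) j i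
      = ∑ i ∈ Finset.range (s' + 1), ∑ j ∈ Finset.Icc i r', FF (m' - 1) j i := by
    rw [show ((s' : ℤ)) = (((s' + 1 : ℕ) : ℤ) - 1) by omega,
      sum_Icc_zero (fun i => ∑ j ∈ Finset.Icc i (r' : ℤ), fGF ((m' : ℤ) - 1) j i) (s' + 1)]
    refine Finset.sum_congr rfl fun i _ => ?_
    rw [sum_Icc_cast (fun j => fGF ((m' : ℤ) - 1) j (i : ℤ)) i r']
    exact Finset.sum_congr rfl fun j _ => by rw [hcast1, fGF_natCast]
  have h4 : ∑ j ∈ Finset.Icc ((s' : ℤ) + 1) ((r' : ℤ) - 1),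
        ∑ i ∈ Finset.Icc (0 : ℤ) ((s' : ℤ) - 1), fGF ((m' : ℤ) - 2) j i
      = ∑ j ∈ Finset.Icc (s' + 1) (r' - 1), ∑ i ∈ Finset.range s', FF (m' - 2) j i := by
    rw [show ((s' : ℤ) + 1) = ((s' + 1 : ℕ) : ℤ) by omega,
      show ((r' : ℤ) - 1) = ((r' - 1 : ℕ) : ℤ) by omega,
      sum_Icc_cast (fun j => ∑ i ∈ Finset.Icc (0 : ℤ) ((s' : ℤ) - 1),
        fGF ((m' : ℤ) - 2) j i) (s' + 1) (r' - 1)]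
    refine Finset.sum_congr rfl fun j hj => ?_
    obtain ⟨hj1, hj2⟩ := Finset.mem_Icc.mp hj
    have hm2 : 2 ≤ m' := by omega
    have hcast2 : (m' : ℤ) - 2 = ((m' - 2 : ℕ) : ℤ) := by omega
    rw [sum_Icc_zero (fun i => fGF ((m' : ℤ) - 2) (j : ℤ) i) s']
    exact Finset.sum_congr rfl fun i _ => by rw [hcast2, fGF_natCast]
  rw [fGF_natCast, h1, h2, h3, h4]
  exact main_nat m' r' s' hm1 hsr1 hrm1
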